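/- Let α ∈ (0,1), ω ∈ (0,∞), X a real Banach space, u₀ ∈ X, and let u : [0,ω) → X be continuous with u(t) = u₀ + (1/Γ(α)) ∫_0^t (t−s)^{α−1} g(s) ds for all t ∈ [0,ω), where g : [0,ω) → X is continuous and bounded. Then the limit u_ω := lim_{t→ω⁻} u(t) exists in X, and the extension of u to [0,ω] by u(ω) := u_ω is continuous and satisfies u(ω) = u₀ + (1/Γ(α)) ∫_0^ω (ω−s)^{α−1} g(s) ds. -/

import Mathlib

open Set MeasureTheory Filter intervalIntegral

lemma frac_rpow_ii {α : ℝ} (hα0 : 0 < α) (d a b : ℝ) :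
    IntervalIntegrable (fun r => (d - r) ^ (α - 1)) volume a b := by
  have h0 : IntervalIntegrable (fun x : ℝ => x ^ (α - 1)) volume (d - a) (d - b) :=
    intervalIntegral.intervalIntegrable_rpow' (by linarith)
  simpa using h0.comp_sub_left d

lemma frac_rpow_integral {α : ℝ} (hα0 : 0 < α) (d a b : ℝ) :
    ∫ r in a..b, (d - r) ^ (α - 1) = ((d - a) ^ α - (d - b) ^ α) / α := by
  rw [intervalIntegral.integral_comp_sub_left (fun x => x ^ (α - 1)) d,
    integral_rpow (Or.inl (by linarith))]
  rw [sub_add_cancel]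

lemma frac_rpow_subadd {x y p : ℝ} (hx : 0 ≤ x) (hy : 0 ≤ y) (hp : 0 ≤ p) (hp1 : p ≤ 1) :
    (x + y) ^ p ≤ x ^ p + y ^ p := by
  have h := NNReal.rpow_add_le_add_rpow (⟨x, hx⟩ : NNReal) (⟨y, hy⟩ : NNReal) hp hp1
  have h2 := NNReal.coe_le_coe.mpr h
  exact h2

lemma frac_integrable {X : Type*} [NormedAddCommGroup X] [NormedSpace ℝ X]
    {α ω M : ℝ} (hα0 : 0 < α) {g : ℝ → X}
    (hg_meas : AEStronglyMeasurable g (volume.restrict (Set.Ico 0 ω)))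
    (hgM : ∀ s ∈ Set.Ico (0 : ℝ) ω, ‖g s‖ ≤ M)
    {a b d : ℝ} (ha : 0 ≤ a) (hab : a ≤ b) (hbd : b ≤ d) (hdω : d ≤ ω) :
    IntervalIntegrable (fun r => ((d - r) ^ (α - 1)) • g r) volume a b := by
  rw [intervalIntegrable_iff_integrableOn_Ioc_of_le hab]
  have hres : volume.restrict (Set.Ioc a b) = volume.restrict (Set.Ioo a b) :=
    (Measure.restrict_congr_set Ioo_ae_eq_Ioc).symm
  unfold IntegrableOn
  rw [hres]
  have hsub : Set.Ioo a b ⊆ Set.Ico 0 ω := fun x hx =>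
    ⟨ha.trans hx.1.le, lt_of_lt_of_le hx.2 (hbd.trans hdω)⟩
  have hgm : AEStronglyMeasurable g (volume.restrict (Set.Ioo a b)) :=
    hg_meas.mono_measure (Measure.restrict_mono hsub le_rfl)
  have hwc : ContinuousOn (fun r : ℝ => (d - r) ^ (α - 1)) (Set.Ioo a b) := by
    apply ContinuousOn.rpow_const
    · exact (continuous_const.sub continuous_id).continuousOn
    · intro x hx
      left
      have : x < d := lt_of_lt_of_le hx.2 hbd
      exact sub_ne_zero_of_ne this.ne'
  have hwm : AEStronglyMeasurable (fun r => ((d - r) ^ (α - 1)) • g r)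
      (volume.restrict (Set.Ioo a b)) :=
    (hwc.aestronglyMeasurable measurableSet_Ioo).smul hgm
  refine Integrable.mono' (g := fun r => M * (d - r) ^ (α - 1)) ?_ hwm ?_
  · have h1 : IntervalIntegrable (fun r => M * (d - r) ^ (α - 1)) volume a b :=
      (frac_rpow_ii hα0 d a b).const_mul M
    rw [intervalIntegrable_iff_integrableOn_Ioc_of_le hab] at h1
    exact h1.mono_set Set.Ioo_subset_Ioc_self
  · filter_upwards [ae_restrict_mem measurableSet_Ioo] with x hx
    have hdx : 0 ≤ d - x := by
      have : x < d := lt_of_lt_of_le hx.2 hbd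
      linarith
    rw [norm_smul, Real.norm_eq_abs, abs_of_nonneg (Real.rpow_nonneg hdx _)]
    calc (d - x) ^ (α - 1) * ‖g x‖ ≤ (d - x) ^ (α - 1) * M :=
          mul_le_mul_of_nonneg_left (hgM x (hsub hx)) (Real.rpow_nonneg hdx _)
      _ = M * (d - x) ^ (α - 1) := mul_comm _ _

/-- Continuation at the endpoint: if `u(t) = u₀ + (1/Γ(α)) ∫_0^t (t-s)^{α-1} g(s) ds`
on `[0,ω)` with `g` continuous and bounded, then `u(t)` has a limit `u_ω` as `t → ω⁻`,
the extension of `u` to `[0,ω]` by `u(ω) := u_ω` is continuous, and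
`u_ω = u₀ + (1/Γ(α)) ∫_0^ω (ω-s)^{α-1} g(s) ds`. -/
theorem fractional_extension_to_endpoint
    (α ω : ℝ) (hα : α ∈ Set.Ioo (0 : ℝ) 1) (hω : 0 < ω)
    (X : Type*) [NormedAddCommGroup X] [NormedSpace ℝ X] [CompleteSpace X]
    (u₀ : X) (u g : ℝ → X)
    (hu_cont : ContinuousOn u (Set.Ico 0 ω))
    (hg_cont : ContinuousOn g (Set.Ico 0 ω))
    (hg_bdd : ∃ M : ℝ, ∀ s ∈ Set.Ico (0 : ℝ) ω, ‖g s‖ ≤ M)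
    (hu : ∀ s ∈ Set.Ico (0 : ℝ) ω,
      u s = u₀ + (1 / Real.Gamma α) •
        ∫ r in (0 : ℝ)..s, ((s - r) ^ (α - 1)) • g r) :
    ∃ uω : X,
      Filter.Tendsto u (nhdsWithin ω (Set.Iio ω)) (nhds uω) ∧
      ContinuousOn (Function.update u ω uω) (Set.Icc 0 ω) ∧
      uω = u₀ + (1 / Real.Gamma α) •
        ∫ r in (0 : ℝ)..ω, ((ω - r) ^ (α - 1)) • g r := by
  obtain ⟨hα0, hα1⟩ := hα
  obtain ⟨M₀, hM₀⟩ := hg_bdd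
  set M := max M₀ 0 with hMdef
  have hMnn : 0 ≤ M := le_max_right _ _
  have hgM : ∀ s ∈ Set.Ico (0 : ℝ) ω, ‖g s‖ ≤ M := fun s hs =>
    (hM₀ s hs).trans (le_max_left _ _)
  have hg_meas : AEStronglyMeasurable g (volume.restrict (Set.Ico 0 ω)) :=
    hg_cont.aestronglyMeasurable measurableSet_Ico
  set c : ℝ := 1 / Real.Gamma α with hc
  set F : ℝ → X := fun t => ∫ r in (0 : ℝ)..t, ((t - r) ^ (α - 1)) • g r with hF
  have est : ∀ t, 0 ≤ t → t < ω → ‖F ω - F t‖ ≤ 2 * M * (ω - t) ^ α / α := by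
    intro t ht0 htω
    have key1 : IntervalIntegrable (fun r => ((ω - r) ^ (α - 1)) • g r) volume 0 t :=
      frac_integrable hα0 hg_meas hgM le_rfl ht0 htω.le le_rfl
    have key2 : IntervalIntegrable (fun r => ((ω - r) ^ (α - 1)) • g r) volume t ω :=
      frac_integrable hα0 hg_meas hgM ht0 htω.le le_rfl le_rfl
    have key3 : IntervalIntegrable (fun r => ((t - r) ^ (α - 1)) • g r) volume 0 t :=
      frac_integrable hα0 hg_meas hgM le_rfl ht0 le_rfl htω.le
    have hsplit : F ω = (∫ r in (0 : ℝ)..t, ((ω - r) ^ (α - 1)) • g r)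
        + ∫ r in t..ω, ((ω - r) ^ (α - 1)) • g r := by
      rw [hF]
      exact (intervalIntegral.integral_add_adjacent_intervals key1 key2).symm
    have hne : ∀ᵐ x ∂(volume : Measure ℝ), x ≠ t := by
      rw [ae_iff]; simpa using measure_singleton t
    have hneω : ∀ᵐ x ∂(volume : Measure ℝ), x ≠ ω := by
      rw [ae_iff]; simpa using measure_singleton ω
    have hb1 : ‖(∫ r in (0 : ℝ)..t, ((ω - r) ^ (α - 1)) • g r) - F t‖
        ≤ M * (ω - t) ^ α / α := by
      rw [hF]
      simp only
      rw [← intervalIntegral.integral_sub key1 key3]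
      simp_rw [← sub_smul]
      have hbd : IntervalIntegrable
          (fun r => M * ((t - r) ^ (α - 1) - (ω - r) ^ (α - 1))) volume 0 t :=
        ((frac_rpow_ii hα0 t 0 t).sub (frac_rpow_ii hα0 ω 0 t)).const_mul M
      have h1 := intervalIntegral.norm_integral_le_abs_of_norm_le (μ := volume)
        (f := fun r => ((ω - r) ^ (α - 1) - (t - r) ^ (α - 1)) • g r)
        (g := fun r => M * ((t - r) ^ (α - 1) - (ω - r) ^ (α - 1)))
        (a := 0) (b := t) ?_ hbd
      · refine h1.trans ?_
        have hval : (∫ r in (0:ℝ)..t, M * ((t - r) ^ (α - 1) - (ω - r) ^ (α - 1)))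
            = M * ((t ^ α - 0 ^ α) / α - (ω ^ α - (ω - t) ^ α) / α) := by
          rw [intervalIntegral.integral_const_mul,
            intervalIntegral.integral_sub (frac_rpow_ii hα0 t 0 t) (frac_rpow_ii hα0 ω 0 t),
            frac_rpow_integral hα0 t 0 t, frac_rpow_integral hα0 ω 0 t]
          simp only [sub_zero, sub_self]
        rw [hval, Real.zero_rpow hα0.ne']
        have hsubadd : ω ^ α ≤ t ^ α + (ω - t) ^ α := by
          have h := frac_rpow_subadd ht0 (by linarith : (0:ℝ) ≤ ω - t) hα0.le hα1.le
          simpa using h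
        have htω' : t ^ α ≤ ω ^ α := Real.rpow_le_rpow ht0 htω.le hα0.le
        have e1 : 0 ≤ (t ^ α - 0) / α - (ω ^ α - (ω - t) ^ α) / α := by
          rw [div_sub_div_same]
          exact div_nonneg (by linarith) hα0.le
        rw [abs_of_nonneg (mul_nonneg hMnn e1)]
        have e2 : (t ^ α - 0) / α - (ω ^ α - (ω - t) ^ α) / α ≤ (ω - t) ^ α / α := by
          rw [div_sub_div_same]
          gcongr
          linarith
        calc M * ((t ^ α - 0) / α - (ω ^ α - (ω - t) ^ α) / α)
            ≤ M * ((ω - t) ^ α / α) := mul_le_mul_of_nonneg_left e2 hMnn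
          _ = M * (ω - t) ^ α / α := by ring
      · rw [uIoc_of_le ht0]
        filter_upwards [ae_restrict_mem measurableSet_Ioc, ae_restrict_of_ae hne]
          with x hx hxt
        have hxt' : x < t := lt_of_le_of_ne hx.2 hxt
        have h0x : 0 < x := hx.1
        have h1' : (ω - x) ^ (α - 1) ≤ (t - x) ^ (α - 1) :=
          Real.rpow_le_rpow_of_nonpos (by linarith) (by linarith) (by linarith)
        rw [norm_smul, Real.norm_eq_abs, abs_of_nonpos (by linarith)]
        calc (-((ω - x) ^ (α - 1) - (t - x) ^ (α - 1))) * ‖g x‖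
            ≤ ((t - x) ^ (α - 1) - (ω - x) ^ (α - 1)) * M := by
              rw [neg_sub]
              exact mul_le_mul_of_nonneg_left (hgM x ⟨h0x.le, by linarith⟩) (by linarith)
          _ = M * ((t - x) ^ (α - 1) - (ω - x) ^ (α - 1)) := mul_comm _ _
    have hb2 : ‖∫ r in t..ω, ((ω - r) ^ (α - 1)) • g r‖ ≤ M * (ω - t) ^ α / α := by
      have hbd : IntervalIntegrable (fun r => M * (ω - r) ^ (α - 1)) volume t ω :=
        (frac_rpow_ii hα0 ω t ω).const_mul M
      have h1 := intervalIntegral.norm_integral_le_abs_of_norm_le (μ := volume)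
        (f := fun r => ((ω - r) ^ (α - 1)) • g r)
        (g := fun r => M * (ω - r) ^ (α - 1))
        (a := t) (b := ω) ?_ hbd
      · refine h1.trans ?_
        rw [intervalIntegral.integral_const_mul, frac_rpow_integral hα0 ω t ω, sub_self,
          Real.zero_rpow hα0.ne', sub_zero]
        rw [abs_of_nonneg (mul_nonneg hMnn
          (div_nonneg (Real.rpow_nonneg (by linarith) _) hα0.le))]
        rw [mul_div_assoc]
      · rw [uIoc_of_le htω.le]
        filter_upwards [ae_restrict_mem measurableSet_Ioc, ae_restrict_of_ae hneω]
          with x hx hxω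
        have hxω' : x < ω := lt_of_le_of_ne hx.2 hxω
        rw [norm_smul, Real.norm_eq_abs,
          abs_of_nonneg (Real.rpow_nonneg (by linarith) _)]
        calc (ω - x) ^ (α - 1) * ‖g x‖
            ≤ (ω - x) ^ (α - 1) * M := mul_le_mul_of_nonneg_left
              (hgM x ⟨le_trans ht0 hx.1.le, hxω'⟩) (Real.rpow_nonneg (by linarith) _)
          _ = M * (ω - x) ^ (α - 1) := mul_comm _ _
    calc ‖F ω - F t‖
        = ‖((∫ r in (0:ℝ)..t, ((ω - r) ^ (α - 1)) • g r) - F t)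
            + ∫ r in t..ω, ((ω - r) ^ (α - 1)) • g r‖ := by
          rw [hsplit, add_sub_right_comm]
      _ ≤ ‖(∫ r in (0:ℝ)..t, ((ω - r) ^ (α - 1)) • g r) - F t‖
            + ‖∫ r in t..ω, ((ω - r) ^ (α - 1)) • g r‖ := norm_add_le _ _
      _ ≤ M * (ω - t) ^ α / α + M * (ω - t) ^ α / α := add_le_add hb1 hb2
      _ = 2 * M * (ω - t) ^ α / α := by ring
  set uω : X := u₀ + c • F ω with huω
  have hFtend : Filter.Tendsto u (nhdsWithin ω (Set.Iio ω)) (nhds uω) := by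
    rw [← tendsto_sub_nhds_zero_iff]
    have hmem : Set.Ioo 0 ω ∈ nhdsWithin ω (Set.Iio ω) := by
      rw [← Set.Ioi_inter_Iio]
      exact inter_mem (mem_nhdsWithin_of_mem_nhds (Ioi_mem_nhds hω)) self_mem_nhdsWithin
    apply squeeze_zero_norm' (a := fun t => |c| * (2 * M * (ω - t) ^ α / α))
    · filter_upwards [hmem] with t ht
      rw [hu t ⟨ht.1.le, ht.2⟩, huω]
      have heq : (u₀ + c • F t) - (u₀ + c • F ω) = c • (F t - F ω) := by
        rw [smul_sub]; abel
      rw [heq, norm_smul, Real.norm_eq_abs]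
      refine mul_le_mul_of_nonneg_left ?_ (abs_nonneg c)
      rw [norm_sub_rev]
      exact est t ht.1.le ht.2
    · have h1 : Filter.Tendsto (fun t : ℝ => ω - t) (nhdsWithin ω (Set.Iio ω)) (nhds 0) := by
        have hcont : Continuous (fun t : ℝ => ω - t) := continuous_const.sub continuous_id
        have h0 := (hcont.tendsto ω).mono_left (nhdsWithin_le_nhds (s := Set.Iio ω))
        simpa using h0
      have h2 : Filter.Tendsto (fun x : ℝ => x ^ α) (nhds (0:ℝ)) (nhds 0) := by
        have h := (Real.continuousAt_rpow_const 0 α (Or.inr hα0.le))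
        rw [ContinuousAt, Real.zero_rpow hα0.ne'] at h
        exact h
      have h3 := h2.comp h1
      have h4 : Filter.Tendsto (fun t : ℝ => |c| * (2 * M * (ω - t) ^ α / α))
          (nhdsWithin ω (Set.Iio ω)) (nhds (|c| * (2 * M * 0 / α))) :=
        (((h3.const_mul (2 * M)).div_const α).const_mul |c|)
      simpa using h4
  refine ⟨uω, hFtend, ?_, ?_⟩
  · intro x hx
    rcases eq_or_lt_of_le hx.2 with hxω | hxω
    · subst hxω
      unfold ContinuousWithinAt
      rw [Function.update_self]
      have hIcc : Set.Icc (0:ℝ) x = Set.Ico 0 x ∪ {x} := (Set.Ico_union_right hx.1).symm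
      rw [hIcc, nhdsWithin_union, tendsto_sup]
      constructor
      · have htu : Filter.Tendsto u (nhdsWithin x (Set.Ico 0 x)) (nhds uω) :=
          hFtend.mono_left (nhdsWithin_mono _ (fun y hy => hy.2))
        refine Filter.Tendsto.congr' ?_ htu
        filter_upwards [self_mem_nhdsWithin] with y hy
        exact (Function.update_of_ne hy.2.ne _ _).symm
      · rw [nhdsWithin_singleton]
        have h5 := tendsto_pure_nhds (Function.update u x uω) x
        rwa [Function.update_self] at h5
    · have h1 : ContinuousWithinAt u (Set.Ico 0 ω) x := hu_cont x ⟨hx.1, hxω⟩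
      have h2 : ContinuousWithinAt (Function.update u ω uω) (Set.Ico 0 ω) x :=
        h1.congr (fun y hy => Function.update_of_ne hy.2.ne _ _)
          (Function.update_of_ne hxω.ne _ _)
      have hset : Set.Icc (0:ℝ) ω =ᶠ[nhds x] Set.Ico 0 ω := by
        rw [Filter.eventuallyEq_set]
        filter_upwards [Iio_mem_nhds hxω] with y hy
        constructor
        · intro h; exact ⟨h.1, hy⟩
        · intro h; exact ⟨h.1, h.2.le⟩
      exact h2.congr_set hset.symm
  · rw [huω, hc, hF]
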